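/- Let X be a Banach space, let F ⊆ X be a closed, bounded, convex set with 0 in its interior, and let Ω, Ω_1, …, Ω_n (n ≥ 2) be nonempty closed convex subsets of X. Fix x̄ ∈ Ω and assume that Π^F_{Ω_i}(x̄) ≠ ∅ for each i with x̄ ∉ Ω_i; for each such i select ω̄_i ∈ Π^F_{Ω_i}(x̄) and set A_i(x̄) := N(ω̄_i;Ω_i) ∩ (−∂ρ_F(ω̄_i − x̄)), while for each i with x̄ ∈ Ω_i set A_i(x̄) := N(x̄;Ω_i) ∩ C*. Then x̄ is a global optimal solution of the generalized Heron problem if and only if 0 ∈ Σ_{i=1}^n A_i(x̄) + N(x̄;Ω) (Minkowski sum of sets in X*). -/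

import Mathlib

open Set Metric Bornology Pointwise

/-- The minimal time function `T^F_Q(x) = inf {t ≥ 0 : Q ∩ (x + tF) ≠ ∅}`. -/
noncomputable def minTime {X : Type*} [NormedAddCommGroup X] [NormedSpace ℝ X]
    (F Q : Set X) (x : X) : ℝ :=
  sInf {t : ℝ | 0 ≤ t ∧ (Q ∩ ({x} + t • F)).Nonempty}

/-- The normal cone of convex analysis, as a subset of the topological dual:
`N(x̄;C) = {x* : ⟨x*, x - x̄⟩ ≤ 0 for all x ∈ C}`. -/
def dualNormalCone {X : Type*} [NormedAddCommGroup X] [NormedSpace ℝ X]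
    (C : Set X) (xbar : X) : Set (X →L[ℝ] ℝ) :=
  {f | ∀ x ∈ C, f (x - xbar) ≤ 0}

/-- The subdifferential of convex analysis of `φ : X → ℝ` at `x̄`, as a subset of
the topological dual. -/
def dualSubdiff {X : Type*} [NormedAddCommGroup X] [NormedSpace ℝ X]
    (φ : X → ℝ) (xbar : X) : Set (X →L[ℝ] ℝ) :=
  {f | ∀ x, f (x - xbar) ≤ φ x - φ xbar}

/-- The support function `σ_F(x*) = sup {⟨x*, x⟩ : x ∈ F}`. -/
noncomputable def suppFn {X : Type*} [NormedAddCommGroup X] [NormedSpace ℝ X]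
    (F : Set X) (f : X →L[ℝ] ℝ) : ℝ :=
  sSup (f '' F)

section Aux

variable {X : Type*} [NormedAddCommGroup X] [NormedSpace ℝ X]
variable {F Q : Set X}

lemma mem_singleton_add_iff {x y : X} {s : Set X} :
    y ∈ ({x} : Set X) + s ↔ y - x ∈ s := by
  constructor
  · rintro ⟨a, ha, b, hb, rfl⟩
    simp only [mem_singleton_iff] at ha
    subst ha; simpa using hb
  · intro h
    refine ⟨x, rfl, y - x, h, ?_⟩
    show x + (y - x) = y
    rw [add_comm, sub_add_cancel]

lemma minTime_nonneg (x : X) : 0 ≤ minTime F Q x :=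
  Real.sInf_nonneg (fun _ ht => ht.1)

lemma minTime_le_of {t : ℝ} {q x : X} (hq : q ∈ Q) (hv : q - x ∈ t • F) (ht : 0 ≤ t) :
    minTime F Q x ≤ t :=
  csInf_le ⟨0, fun _ hs => hs.1⟩ ⟨ht, ⟨q, hq, mem_singleton_add_iff.2 hv⟩⟩

lemma feas_nonempty (hF0 : (0 : X) ∈ interior F) (hQ : Q.Nonempty) (x : X) :
    {t : ℝ | 0 ≤ t ∧ (Q ∩ ({x} + t • F)).Nonempty}.Nonempty := by
  obtain ⟨q, hq⟩ := hQ
  have habs : Absorbent ℝ F := absorbent_nhds_zero (mem_interior_iff_mem_nhds.1 hF0)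
  obtain ⟨b, hb0, _, hbmem⟩ := exists_lt_of_gauge_lt habs
    (show gauge F (q - x) < gauge F (q - x) + 1 by linarith)
  exact ⟨b, hb0.le, ⟨q, hq, mem_singleton_add_iff.2 hbmem⟩⟩

lemma le_minTime (hF0 : (0 : X) ∈ interior F) (hQ : Q.Nonempty) {a : ℝ} {x : X}
    (h : ∀ t, 0 ≤ t → ∀ q ∈ Q, q - x ∈ t • F → a ≤ t) : a ≤ minTime F Q x := by
  refine le_csInf (feas_nonempty hF0 hQ x) ?_
  rintro t ⟨ht, q, hq, hmem⟩
  exact h t ht q hq (mem_singleton_add_iff.1 hmem)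

lemma gauge_smul_mem (hFc : IsClosed F) (hFb : IsBounded F) (hFconv : Convex ℝ F)
    (hF0 : (0 : X) ∈ interior F) (z : X) : z ∈ gauge F z • F := by
  have hnhds : F ∈ nhds (0 : X) := mem_interior_iff_mem_nhds.1 hF0
  have habs : Absorbent ℝ F := absorbent_nhds_zero hnhds
  have hvb : Bornology.IsVonNBounded ℝ F := NormedSpace.isVonNBounded_of_isBounded _ hFb
  rcases eq_or_ne z 0 with rfl | hz
  · rw [gauge_zero, zero_smul_set ⟨0, interior_subset hF0⟩]
    exact Set.mem_zero.2 rfl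
  · have hg : 0 < gauge F z := (gauge_pos habs hvb).2 hz
    have h1 : gauge F ((gauge F z)⁻¹ • z) ≤ 1 := by
      rw [gauge_smul_of_nonneg (inv_nonneg.2 hg.le)]
      rw [smul_eq_mul, inv_mul_cancel₀ hg.ne']
    have hmem : (gauge F z)⁻¹ • z ∈ closure F :=
      (gauge_le_one_iff_mem_closure hFconv hnhds).1 h1
    rw [hFc.closure_eq] at hmem
    have h2 := smul_mem_smul_set (a := gauge F z) hmem
    rwa [smul_inv_smul₀ hg.ne'] at h2

lemma minTime_le_gauge (hFc : IsClosed F) (hFb : IsBounded F) (hFconv : Convex ℝ F)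
    (hF0 : (0 : X) ∈ interior F) {q : X} (hq : q ∈ Q) (x : X) :
    minTime F Q x ≤ gauge F (q - x) :=
  minTime_le_of hq (gauge_smul_mem hFc hFb hFconv hF0 _) (gauge_nonneg _)

lemma minTime_eq_gauge (hFc : IsClosed F) (hFb : IsBounded F) (hFconv : Convex ℝ F)
    (hF0 : (0 : X) ∈ interior F) {w x : X} (hw : w ∈ Q)
    (hwv : w - x ∈ minTime F Q x • F) : minTime F Q x = gauge F (w - x) :=
  le_antisymm (minTime_le_gauge hFc hFb hFconv hF0 hw x)
    (gauge_le_of_mem (minTime_nonneg x) hwv)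

lemma minTime_eq_zero (hF0 : (0 : X) ∈ interior F) {x : X} (hx : x ∈ Q) :
    minTime F Q x = 0 := by
  refine le_antisymm ?_ (minTime_nonneg x)
  refine minTime_le_of hx ?_ le_rfl
  rw [zero_smul_set ⟨0, interior_subset hF0⟩]
  simp

lemma smul_add_smul_mem (hFconv : Convex ℝ F) {s1 s2 : ℝ} {v1 v2 : X}
    (hs1 : 0 ≤ s1) (hs2 : 0 ≤ s2) (hv1 : v1 ∈ F) (hv2 : v2 ∈ F) :
    s1 • v1 + s2 • v2 ∈ (s1 + s2) • F := by
  rcases eq_or_lt_of_le (add_nonneg hs1 hs2) with h0 | hpos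
  · have h1 : s1 = 0 := by linarith
    have h2 : s2 = 0 := by linarith
    rw [h1, h2]
    rw [show (0:ℝ) + 0 = 0 by ring, zero_smul_set ⟨v1, hv1⟩]
    simp
  · set s := s1 + s2 with hs
    have hmem : (s1/s) • v1 + (s2/s) • v2 ∈ F := hFconv hv1 hv2 (div_nonneg hs1 hpos.le)
      (div_nonneg hs2 hpos.le) (by field_simp; exact hs.symm)
    have h2 := smul_mem_smul_set (a := s) hmem
    rwa [smul_add, smul_smul, smul_smul, mul_div_cancel₀ _ hpos.ne',
      mul_div_cancel₀ _ hpos.ne'] at h2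

lemma minTime_convexOn (hFconv : Convex ℝ F) (hF0 : (0 : X) ∈ interior F)
    (hQconv : Convex ℝ Q) (hQ : Q.Nonempty) :
    ConvexOn ℝ Set.univ (minTime F Q) := by
  refine ⟨convex_univ, ?_⟩
  intro x _ y _ p q hp hq hpq
  simp only [smul_eq_mul]
  refine le_of_forall_pos_le_add ?_
  intro ε hε
  have hx := feas_nonempty hF0 hQ x
  have hy := feas_nonempty hF0 hQ y
  have hxe : sInf {t : ℝ | 0 ≤ t ∧ (Q ∩ ({x} + t • F)).Nonempty} = minTime F Q x := rfl
  have hye : sInf {t : ℝ | 0 ≤ t ∧ (Q ∩ ({y} + t • F)).Nonempty} = minTime F Q y := rfl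
  obtain ⟨t1, ht1mem, ht1⟩ := exists_lt_of_csInf_lt hx
    (show _ < minTime F Q x + ε/2 by rw [hxe]; linarith)
  obtain ⟨t2, ht2mem, ht2⟩ := exists_lt_of_csInf_lt hy
    (show _ < minTime F Q y + ε/2 by rw [hye]; linarith)
  obtain ⟨ht1n, q1, hq1, hq1mem⟩ := ht1mem
  obtain ⟨ht2n, q2, hq2, hq2mem⟩ := ht2mem
  rw [mem_singleton_add_iff] at hq1mem hq2mem
  obtain ⟨v1, hv1, hv1e⟩ := hq1mem
  obtain ⟨v2, hv2, hv2e⟩ := hq2mem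
  change t1 • v1 = q1 - x at hv1e
  change t2 • v2 = q2 - y at hv2e
  have hmemQ : p • q1 + q • q2 ∈ Q := hQconv hq1 hq2 hp hq hpq
  have hdiff : (p • q1 + q • q2) - (p • x + q • y) = (p * t1) • v1 + (q * t2) • v2 := by
    have e1 : q1 = x + t1 • v1 := by rw [hv1e]; abel
    have e2 : q2 = y + t2 • v2 := by rw [hv2e]; abel
    rw [e1, e2, smul_add, smul_add, smul_smul, smul_smul]
    abel
  have hmemF : (p • q1 + q • q2) - (p • x + q • y) ∈ (p * t1 + q * t2) • F := by
    rw [hdiff]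
    exact smul_add_smul_mem hFconv (mul_nonneg hp ht1n) (mul_nonneg hq ht2n) hv1 hv2
  have hle := minTime_le_of hmemQ hmemF (add_nonneg (mul_nonneg hp ht1n) (mul_nonneg hq ht2n))
  have h1 : p * t1 ≤ p * (minTime F Q x + ε/2) := mul_le_mul_of_nonneg_left ht1.le hp
  have h2 : q * t2 ≤ q * (minTime F Q y + ε/2) := mul_le_mul_of_nonneg_left ht2.le hq
  nlinarith [hle]

lemma minTime_sub_le (hFc : IsClosed F) (hFb : IsBounded F) (hFconv : Convex ℝ F)
    (hF0 : (0 : X) ∈ interior F) (hQ : Q.Nonempty) (x y : X) :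
    minTime F Q x ≤ minTime F Q y + gauge F (y - x) := by
  have key : minTime F Q x - gauge F (y - x) ≤ minTime F Q y := by
    refine le_minTime hF0 hQ ?_
    intro t ht q hq hmem
    have : q - x ∈ (t + gauge F (y - x)) • F := by
      rw [hFconv.add_smul ht (gauge_nonneg _)]
      have h2 : y - x ∈ gauge F (y - x) • F := gauge_smul_mem hFc hFb hFconv hF0 _
      have : q - x = (q - y) + (y - x) := by abel
      rw [this]
      exact Set.add_mem_add hmem h2
    have := minTime_le_of hq this (add_nonneg ht (gauge_nonneg _))
    linarith
  linarith

lemma minTime_continuous (hFc : IsClosed F) (hFb : IsBounded F) (hFconv : Convex ℝ F)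
    (hF0 : (0 : X) ∈ interior F) (hQ : Q.Nonempty) :
    Continuous (minTime F Q) := by
  obtain ⟨r, hr, hball⟩ := Metric.mem_nhds_iff.1 (mem_interior_iff_mem_nhds.1 hF0)
  have hgauge : ∀ z : X, gauge F z ≤ ‖z‖ / r := by
    intro z
    have := gauge_mono (absorbent_ball_zero hr) hball z
    rwa [gauge_ball hr.le] at this
  rw [Metric.continuous_iff]
  intro x ε hε
  refine ⟨r * ε / 2, by positivity, ?_⟩
  intro y hxy
  rw [Real.dist_eq, abs_lt]
  have h1 := minTime_sub_le hFc hFb hFconv hF0 hQ x y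
  have h2 := minTime_sub_le hFc hFb hFconv hF0 hQ y x
  have hg1 := hgauge (x - y)
  have hg2 := hgauge (y - x)
  rw [dist_eq_norm] at hxy
  have hn : ‖x - y‖ = ‖y - x‖ := norm_sub_rev x y
  rw [hn] at hg1
  have hrε : ‖y - x‖ / r < ε := by
    rw [div_lt_iff₀ hr]
    nlinarith
  constructor <;> linarith

end Aux

section Chip

variable {X : Type*} [NormedAddCommGroup X] [NormedSpace ℝ X]

set_option maxHeartbeats 1000000 in
lemma chip (φ ψ : X → ℝ) (hφ : ConvexOn ℝ Set.univ φ) (hφc : Continuous φ)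
    (hψ : ConvexOn ℝ Set.univ ψ) (S : Set X) (hS : Convex ℝ S)
    (xb : X) (hxb : xb ∈ S) (hmin : ∀ x ∈ S, φ xb + ψ xb ≤ φ x + ψ x) :
    ∃ a : X →L[ℝ] ℝ, (∀ x, a (x - xb) ≤ φ x - φ xb) ∧
      ∀ x ∈ S, ψ xb + a xb ≤ ψ x + a x := by
  set C1 : Set (X × ℝ) := {p | φ p.1 - φ xb < p.2} with hC1def
  set C2 : Set (X × ℝ) := {p | p.1 ∈ S ∧ p.2 ≤ ψ xb - ψ p.1} with hC2def
  have hC1 : Convex ℝ C1 := by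
    rintro ⟨x1, t1⟩ h1 ⟨x2, t2⟩ h2 a b ha hb hab
    simp only [hC1def, mem_setOf_eq] at h1 h2 ⊢
    simp only [Prod.smul_mk, Prod.mk_add_mk, smul_eq_mul]
    have hx := hφ.2 (mem_univ x1) (mem_univ x2) ha hb hab
    simp only [smul_eq_mul] at hx
    have key : a * (φ x1 - φ xb) + b * (φ x2 - φ xb) < a * t1 + b * t2 := by
      rcases ha.eq_or_lt with rfl | ha'
      · have hb1 : b = 1 := by linarith
        subst hb1
        simp only [zero_mul, zero_add, one_mul]
        linarith
      · have k1 : a * (φ x1 - φ xb) < a * t1 := mul_lt_mul_of_pos_left h1 ha'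
        have k2 : b * (φ x2 - φ xb) ≤ b * t2 := mul_le_mul_of_nonneg_left h2.le hb
        linarith
    have e : a * φ x1 + b * φ x2 - φ xb = a * (φ x1 - φ xb) + b * (φ x2 - φ xb) := by
      linear_combination (φ xb) * hab
    linarith
  have hC1o : IsOpen C1 := by
    have : C1 = {p : X × ℝ | φ p.1 - φ xb < p.2} := rfl
    rw [this]
    exact isOpen_lt ((hφc.comp continuous_fst).sub continuous_const) continuous_snd
  have hC2 : Convex ℝ C2 := by
    rintro ⟨x1, t1⟩ h1 ⟨x2, t2⟩ h2 a b ha hb hab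
    simp only [hC2def, mem_setOf_eq] at h1 h2 ⊢
    simp only [Prod.smul_mk, Prod.mk_add_mk, smul_eq_mul]
    refine ⟨hS h1.1 h2.1 ha hb hab, ?_⟩
    have hx := hψ.2 (mem_univ x1) (mem_univ x2) ha hb hab
    simp only [smul_eq_mul] at hx
    have k1 : a * t1 ≤ a * (ψ xb - ψ x1) := mul_le_mul_of_nonneg_left h1.2 ha
    have k2 : b * t2 ≤ b * (ψ xb - ψ x2) := mul_le_mul_of_nonneg_left h2.2 hb
    have e : a * (ψ xb - ψ x1) + b * (ψ xb - ψ x2) = ψ xb - (a * ψ x1 + b * ψ x2) := by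
      linear_combination (ψ xb) * hab
    linarith
  have hdisj : Disjoint C1 C2 := by
    rw [Set.disjoint_left]
    rintro ⟨x, t⟩ h1 h2
    simp only [hC1def, hC2def, mem_setOf_eq] at h1 h2
    have := hmin x h2.1
    linarith [h2.2]
  obtain ⟨f, u, hfu1, hfu2⟩ := geometric_hahn_banach_open hC1 hC1o hC2 hdisj
  set g : X →L[ℝ] ℝ := f.comp (ContinuousLinearMap.inl ℝ X ℝ) with hgdef
  set c : ℝ := f (0, 1) with hcdef
  have hf : ∀ x t, f (x, t) = g x + t * c := by
    intro x t
    have he : (x, t) = (x, 0) + t • ((0 : X), (1 : ℝ)) := by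
      simp [Prod.ext_iff]
    rw [he, map_add, map_smul, smul_eq_mul]
    rfl
  have hxb1 : ∀ s : ℝ, 0 < s → g xb + s * c < u := by
    intro s hs
    have := hfu1 (xb, s) (by simp [hC1def, hs])
    rwa [hf] at this
  have hxb2 : u ≤ g xb := by
    have := hfu2 (xb, 0) ⟨hxb, by simp⟩
    rw [hf] at this
    simpa using this
  have hc : c < 0 := by
    have := hxb1 1 one_pos
    nlinarith
  have hkey : ∀ x, g x + (φ x - φ xb) * c ≤ u := by
    intro x
    have h1 : ∀ ε : ℝ, 0 < ε → g x + (φ x - φ xb + ε) * c < u := by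
      intro ε hε
      have := hfu1 (x, φ x - φ xb + ε) (by simp only [hC1def, mem_setOf_eq]; linarith)
      rwa [hf] at this
    by_contra hcon
    push_neg at hcon
    set δ := g x + (φ x - φ xb) * c - u with hδ
    have hδpos : 0 < δ := by simp only [hδ]; linarith
    have hεpos : 0 < δ / (-c) := div_pos hδpos (by linarith)
    have := h1 (δ / (-c)) hεpos
    have hcc : (δ / (-c)) * c = -δ := by
      rw [div_mul_eq_mul_div, div_eq_iff (show (-c) ≠ 0 by linarith)]; ring
    nlinarith
  have hu : g xb ≤ u := by
    have := hkey xb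
    simpa using this
  set a : X →L[ℝ] ℝ := (-c)⁻¹ • g with hadef
  have hav : ∀ x, a x = (-c)⁻¹ * g x := fun x => by
    rw [hadef, ContinuousLinearMap.smul_apply, smul_eq_mul]
  have hcpos : 0 < -c := by linarith
  refine ⟨a, ?_, ?_⟩
  · intro x
    have h := hkey x
    have h2 : g x - g xb ≤ (φ x - φ xb) * (-c) := by nlinarith [hxb2]
    rw [map_sub, hav, hav]
    rw [show (-c)⁻¹ * g x - (-c)⁻¹ * g xb = (-c)⁻¹ * (g x - g xb) by ring]
    rw [inv_mul_le_iff₀ hcpos]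
    linarith [h2]
  · intro x hx
    have h := hfu2 (x, ψ xb - ψ x) ⟨hx, le_refl _⟩
    rw [hf] at h
    have h2 : (ψ xb - ψ x) * (-c) ≤ g x - g xb := by nlinarith [hu]
    have h3 : ψ xb - ψ x ≤ (-c)⁻¹ * (g x - g xb) := by
      rw [← div_eq_inv_mul, le_div_iff₀ hcpos]
      linarith
    have h4 : a x - a xb = (-c)⁻¹ * (g x - g xb) := by rw [hav, hav]; ring
    linarith [h3, h4.le, h4.ge]

lemma convexOn_clm (a : X →L[ℝ] ℝ) : ConvexOn ℝ Set.univ (fun x => a x) := by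
  refine ⟨convex_univ, ?_⟩
  intro x _ y _ p q hp hq hpq
  simp [map_add, map_smul, smul_eq_mul]

lemma sum_chip : ∀ (m : ℕ) (φ : Fin m → X → ℝ),
    (∀ i, ConvexOn ℝ Set.univ (φ i)) → (∀ i, Continuous (φ i)) →
    ∀ (ψ : X → ℝ), ConvexOn ℝ Set.univ ψ →
    ∀ (S : Set X), Convex ℝ S → ∀ xb ∈ S,
    (∀ x ∈ S, (∑ i, φ i xb) + ψ xb ≤ (∑ i, φ i x) + ψ x) →
    ∃ a : Fin m → (X →L[ℝ] ℝ), (∀ i, ∀ x, a i (x - xb) ≤ φ i x - φ i xb) ∧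
      ∀ x ∈ S, ψ xb + ∑ i, a i xb ≤ ψ x + ∑ i, a i x := by
  intro m
  induction m with
  | zero =>
    intro φ _ _ ψ _ S _ xb hxb hmin
    refine ⟨fun i => i.elim0, fun i => i.elim0, ?_⟩
    intro x hx
    have := hmin x hx
    simpa using this
  | succ m ih =>
    intro φ hconv hcont ψ hψ S hS xb hxb hmin
    set Ψ : X → ℝ := fun x => (∑ i : Fin m, φ i.succ x) + ψ x with hΨdef
    have hΨconv : ConvexOn ℝ Set.univ Ψ := by
      have hsum : ConvexOn ℝ Set.univ (fun x => ∑ i : Fin m, φ i.succ x) := by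
        classical
        induction (Finset.univ : Finset (Fin m)) using Finset.induction with
        | empty => simpa using convexOn_const (0 : ℝ) convex_univ
        | insert a s hnot ihf =>
          simp only [Finset.sum_insert hnot]
          exact (hconv _).add ihf
      exact hsum.add hψ
    have hmin1 : ∀ x ∈ S, φ 0 xb + Ψ xb ≤ φ 0 x + Ψ x := by
      intro x hx
      have := hmin x hx
      simp only [Fin.sum_univ_succ] at this
      simp only [hΨdef]
      linarith
    obtain ⟨a0, ha0sub, ha0min⟩ := chip (φ 0) Ψ (hconv 0) (hcont 0) hΨconv S hS xb hxb hmin1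
    have hmin2 : ∀ x ∈ S, (∑ i : Fin m, φ i.succ xb) + (ψ xb + a0 xb) ≤
        (∑ i : Fin m, φ i.succ x) + (ψ x + a0 x) := by
      intro x hx
      have := ha0min x hx
      simp only [hΨdef] at this
      linarith
    have hψ2 : ConvexOn ℝ Set.univ (fun x => ψ x + a0 x) := hψ.add (convexOn_clm a0)
    obtain ⟨a', ha'sub, ha'min⟩ := ih (fun i => φ i.succ) (fun i => hconv i.succ)
      (fun i => hcont i.succ) (fun x => ψ x + a0 x) hψ2 S hS xb hxb hmin2
    refine ⟨Fin.cons a0 a', ?_, ?_⟩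
    · intro i x
      refine Fin.cases ?_ ?_ i
      · simpa using ha0sub x
      · intro j
        simpa using ha'sub j x
    · intro x hx
      have := ha'min x hx
      simp only [Fin.sum_univ_succ, Fin.cons_zero, Fin.cons_succ]
      linarith

end Chip

section Subdiff

variable {X : Type*} [NormedAddCommGroup X] [NormedSpace ℝ X]
variable {F Q : Set X}

lemma subdiff_of_mem (hFc : IsClosed F) (hFb : IsBounded F) (hFconv : Convex ℝ F)
    (hF0 : (0 : X) ∈ interior F) (hQ : Q.Nonempty) {xb : X} (hx : xb ∈ Q) :
    dualSubdiff (minTime F Q) xb = dualNormalCone Q xb ∩ {f | suppFn F (-f) ≤ 1} := by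
  have hT0 : minTime F Q xb = 0 := minTime_eq_zero hF0 hx
  ext f
  constructor
  · intro hf
    constructor
    · intro y hy
      have := hf y
      rw [hT0, minTime_eq_zero hF0 hy] at this
      linarith
    · simp only [mem_setOf_eq, suppFn]
      refine Real.sSup_le ?_ zero_le_one
      rintro r ⟨v, hv, rfl⟩
      have h1 : minTime F Q (xb - v) ≤ 1 := by
        refine minTime_le_of hx ?_ zero_le_one
        rw [one_smul]
        simpa using hv
      have := hf (xb - v)
      rw [hT0] at this
      simp only [ContinuousLinearMap.neg_apply]
      have he : xb - v - xb = -v := by abel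
      rw [he, map_neg] at this
      linarith
  · rintro ⟨hf1, hf2⟩
    intro x
    rw [hT0, sub_zero]
    refine le_minTime hF0 hQ ?_
    intro t ht q hq hmem
    obtain ⟨v, hv, hve⟩ := hmem
    change t • v = q - x at hve
    have hbdd : BddAbove ((-f) '' F) := by
      obtain ⟨R, hR⟩ := hFb.exists_norm_le
      refine ⟨‖f‖ * R, ?_⟩
      rintro r ⟨z, hz, rfl⟩
      simp only [ContinuousLinearMap.neg_apply]
      calc -(f z) ≤ |f z| := by rw [abs_eq_max_neg]; exact le_max_right _ _
        _ = ‖f z‖ := rfl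
        _ ≤ ‖f‖ * ‖z‖ := f.le_opNorm z
        _ ≤ ‖f‖ * R := by
            have := hR z hz
            nlinarith [norm_nonneg f, norm_nonneg z]
    have hsup : (-f) v ≤ suppFn F (-f) := le_csSup hbdd ⟨v, hv, rfl⟩
    have hfv : -(f v) ≤ 1 := by
      simp only [ContinuousLinearMap.neg_apply] at hsup
      calc -(f v) ≤ suppFn F (-f) := hsup
        _ ≤ 1 := hf2
    have hsplit : f (x - xb) = f (q - xb) - t * f v := by
      have hqx : q - x = t • v := hve.symm
      have hxx : x - xb = (q - xb) - (q - x) := by abel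
      rw [hxx, map_sub, hqx, map_smul, smul_eq_mul]
    rw [hsplit]
    have hnq := hf1 q hq
    nlinarith [hnq]

lemma subdiff_of_proj (hFc : IsClosed F) (hFb : IsBounded F) (hFconv : Convex ℝ F)
    (hF0 : (0 : X) ∈ interior F) (hQ : Q.Nonempty) {xb w : X} (hw : w ∈ Q)
    (hwv : w - xb ∈ minTime F Q xb • F) :
    dualSubdiff (minTime F Q) xb =
      dualNormalCone Q w ∩ (-(dualSubdiff (gauge F) (w - xb))) := by
  have hTg : minTime F Q xb = gauge F (w - xb) := minTime_eq_gauge hFc hFb hFconv hF0 hw hwv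
  set T := minTime F Q xb with hTdef
  ext f
  constructor
  · intro hf
    have hfw : f (w - xb) = -T := by
      have h1 : f (w - xb) ≤ -T := by
        have := hf w
        rw [minTime_eq_zero hF0 hw] at this
        linarith
      have h2 : -T ≤ f (w - xb) := by
        have hx2 := hf (xb + (xb - w))
        have hle : minTime F Q (xb + (xb - w)) ≤ 2 * T := by
          have hg := minTime_le_gauge hFc hFb hFconv hF0 hw (xb + (xb - w))
          have he : w - (xb + (xb - w)) = (2 : ℝ) • (w - xb) := by
            rw [two_smul]; abel
          rw [he, gauge_smul_of_nonneg (by norm_num : (0:ℝ) ≤ 2), smul_eq_mul, ← hTg] at hg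
          exact hg
        have he2 : (xb + (xb - w)) - xb = -(w - xb) := by abel
        rw [he2, map_neg] at hx2
        linarith
      linarith
    constructor
    · intro y hy
      have := hf y
      rw [minTime_eq_zero hF0 hy] at this
      have he : f (y - w) = f (y - xb) - f (w - xb) := by
        rw [← map_sub]
        congr 1
        abel
      rw [he, hfw]
      linarith
    · rw [Set.mem_neg]
      intro y
      have hx3 := hf (w - y)
      have hle : minTime F Q (w - y) ≤ gauge F y := by
        have hg := minTime_le_gauge hFc hFb hFconv hF0 hw (w - y)
        have he : w - (w - y) = y := by abel
        rwa [he] at hg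
      have he4 : f (w - y - xb) = f (w - xb) - f y := by
        rw [← map_sub]
        congr 1
        abel
      rw [he4, hfw] at hx3
      have he5 : (-f) (y - (w - xb)) = f (w - xb) - f y := by
        simp only [ContinuousLinearMap.neg_apply, map_sub]
        ring
      rw [he5, hfw, ← hTg]
      linarith
  · rintro ⟨hf1, hf2⟩
    rw [Set.mem_neg] at hf2
    intro x
    rw [← hTdef]
    have hgoal : f (x - xb) + T ≤ minTime F Q x := by
      refine le_minTime hF0 hQ ?_
      intro t ht q hq hmem
      have hgq : gauge F (q - x) ≤ t := gauge_le_of_mem ht hmem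
      have hsub := hf2 (q - x)
      simp only [ContinuousLinearMap.neg_apply] at hsub
      rw [← hTg] at hsub
      have hnw : 0 ≤ f (w - q) := by
        have := hf1 q hq
        have he : f (q - w) = -f (w - q) := by rw [← map_neg]; congr 1; abel
        rw [he] at this
        linarith
      have he2 : -f (q - x - (w - xb)) = f (w - q) + f (x - xb) := by
        rw [← map_neg, ← map_add]
        congr 1
        abel
      rw [he2] at hsub
      linarith
    linarith [hgoal]

end Subdiff

/-- Necessary and sufficient optimality conditions for the generalized Heron problem
with convex data in a Banach space: `x̄ ∈ Ω` is a global optimal solution if and only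
if `0 ∈ Σᵢ Aᵢ(x̄) + N(x̄;Ω)`, where `Aᵢ(x̄) = N(ω̄ᵢ;Ωᵢ) ∩ (−∂ρ_F(ω̄ᵢ − x̄))` for
`x̄ ∉ Ωᵢ` (with `ω̄ᵢ ∈ Π^F_{Ωᵢ}(x̄)` a selected generalized projection) and
`Aᵢ(x̄) = N(x̄;Ωᵢ) ∩ C*` for `x̄ ∈ Ωᵢ`, with `C* = {x* : σ_F(−x*) ≤ 1}`. -/
theorem heron_convex_optimality_banach
    {X : Type*} [NormedAddCommGroup X] [NormedSpace ℝ X] [CompleteSpace X]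
    (F : Set X) (hFc : IsClosed F) (hFb : IsBounded F) (hFconv : Convex ℝ F)
    (hF0 : (0 : X) ∈ interior F)
    (n : ℕ) (hn : 2 ≤ n)
    (Ω : Set X) (hΩne : Ω.Nonempty) (hΩc : IsClosed Ω) (hΩconv : Convex ℝ Ω)
    (Ωi : Fin n → Set X) (hΩine : ∀ i, (Ωi i).Nonempty) (hΩic : ∀ i, IsClosed (Ωi i))
    (hΩiconv : ∀ i, Convex ℝ (Ωi i))
    (xbar : X) (hxbar : xbar ∈ Ω)
    (wbar : Fin n → X)
    (hwbar : ∀ i, xbar ∉ Ωi i →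
      wbar i ∈ Ωi i ∩ ({xbar} + minTime F (Ωi i) xbar • F))
    (A : Fin n → Set (X →L[ℝ] ℝ))
    (hAout : ∀ i, xbar ∉ Ωi i →
      A i = dualNormalCone (Ωi i) (wbar i) ∩ (-(dualSubdiff (gauge F) (wbar i - xbar))))
    (hAin : ∀ i, xbar ∈ Ωi i →
      A i = dualNormalCone (Ωi i) xbar ∩ {f | suppFn F (-f) ≤ 1}) :
    (∀ x ∈ Ω, ∑ i, minTime F (Ωi i) xbar ≤ ∑ i, minTime F (Ωi i) x) ↔
      ∃ a : Fin n → (X →L[ℝ] ℝ), (∀ i, a i ∈ A i) ∧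
        ∃ w ∈ dualNormalCone Ω xbar, ∑ i, a i + w = 0 := by
  constructor
  · intro hmin
    have hconv : ∀ i : Fin n, ConvexOn ℝ Set.univ (minTime F (Ωi i)) :=
      fun i => minTime_convexOn hFconv hF0 (hΩiconv i) (hΩine i)
    have hcont : ∀ i : Fin n, Continuous (minTime F (Ωi i)) :=
      fun i => minTime_continuous hFc hFb hFconv hF0 (hΩine i)
    have hmin' : ∀ x ∈ Ω, (∑ i, minTime F (Ωi i) xbar) + (0:ℝ) ≤
        (∑ i, minTime F (Ωi i) x) + 0 := by
      intro x hx
      simpa using hmin x hx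
    obtain ⟨a, hasub, hamin⟩ := sum_chip n (fun i => minTime F (Ωi i)) hconv hcont
      (fun _ => (0:ℝ)) (convexOn_const 0 convex_univ) Ω hΩconv xbar hxbar hmin'
    refine ⟨a, ?_, -(∑ i, a i), ?_, by abel⟩
    · intro i
      by_cases hxi : xbar ∈ Ωi i
      · rw [hAin i hxi, ← subdiff_of_mem hFc hFb hFconv hF0 (hΩine i) hxi]
        exact hasub i
      · obtain ⟨hw1, hw2⟩ := hwbar i hxi
        rw [mem_singleton_add_iff] at hw2
        rw [hAout i hxi, ← subdiff_of_proj hFc hFb hFconv hF0 (hΩine i) hw1 hw2]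
        exact hasub i
    · intro x hx
      have h1 := hamin x hx
      simp only [zero_add] at h1
      have h2 : (-(∑ i, a i)) (x - xbar) = ∑ i, a i xbar - ∑ i, a i x := by
        simp only [ContinuousLinearMap.neg_apply, ContinuousLinearMap.sum_apply, map_sub,
          Finset.sum_sub_distrib]
        ring
      rw [h2]
      linarith
  · rintro ⟨a, hA, w, hwN, hsum⟩ x hx
    have hai : ∀ i : Fin n, ∀ y,
        a i (y - xbar) ≤ minTime F (Ωi i) y - minTime F (Ωi i) xbar := by
      intro i
      by_cases hxi : xbar ∈ Ωi i
      · have hthis := hA i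
        rw [hAin i hxi, ← subdiff_of_mem hFc hFb hFconv hF0 (hΩine i) hxi] at hthis
        exact hthis
      · obtain ⟨hw1, hw2⟩ := hwbar i hxi
        rw [mem_singleton_add_iff] at hw2
        have hthis := hA i
        rw [hAout i hxi, ← subdiff_of_proj hFc hFb hFconv hF0 (hΩine i) hw1 hw2] at hthis
        exact hthis
    have hsum1 : ∑ i, a i (x - xbar) ≤
        ∑ i, minTime F (Ωi i) x - ∑ i, minTime F (Ωi i) xbar := by
      rw [← Finset.sum_sub_distrib]
      exact Finset.sum_le_sum (fun i _ => hai i x)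
    have hw0 : w (x - xbar) ≤ 0 := hwN x hx
    have htotal : (∑ i, a i) (x - xbar) + w (x - xbar) = 0 := by
      have hz : ((∑ i, a i) + w) (x - xbar) = 0 := by rw [hsum]; simp
      simpa [ContinuousLinearMap.add_apply] using hz
    have hsa : (∑ i, a i) (x - xbar) = ∑ i, a i (x - xbar) := by
      simp [ContinuousLinearMap.sum_apply]
    linarith [hsum1, hw0, htotal, hsa.le, hsa.ge]
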